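/- Lower bound for the Agmon distance via a separating annulus: let z ∈ Ω, let W ⊆ W' be closed neighborhoods of z with α := inf{|x − y| : x ∈ Ω \ W', y ∈ W} > 0, and suppose there is K > 0 with inf_{x ∈ cl(W' \ W)} g(x) > K/α. Then for every set B ⊆ Ω with B ∩ W' = ∅, one has inf_{y ∈ B} d_a(z,y) > K. -/

import Mathlib

open MeasureTheory Topology
open scoped ENNReal

/-- The Agmon distance (with values in `[0,∞]`) on a set `Ω` with weight `g`: the infimum
over Lipschitz curves `γ : [0,1] → Ω` joining `x` to `y` of `∫_0^1 g(γ(t)) |γ'(t)| dt`. -/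
noncomputable def agmonDistE {d : ℕ} (Ω : Set (EuclideanSpace ℝ (Fin d)))
    (g : EuclideanSpace ℝ (Fin d) → ℝ) (x y : EuclideanSpace ℝ (Fin d)) : ℝ≥0∞ :=
  sInf {L : ℝ≥0∞ | ∃ γ : ℝ → EuclideanSpace ℝ (Fin d),
    (∃ C : NNReal, LipschitzOnWith C γ (Set.Icc (0:ℝ) 1)) ∧
    (∀ t ∈ Set.Icc (0:ℝ) 1, γ t ∈ Ω) ∧ γ 0 = x ∧ γ 1 = y ∧
    L = ∫⁻ t in Set.Icc (0:ℝ) 1, ENNReal.ofReal (g (γ t) * ‖deriv γ t‖)}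

open Set in
lemma lipschitz_norm_sub_le_lintegral_deriv
    {E : Type*} [NormedAddCommGroup E] [InnerProductSpace ℝ E]
    [FiniteDimensional ℝ E] [MeasurableSpace E] [BorelSpace E]
    {f : ℝ → E} {C : NNReal} {a b : ℝ} (hab : a ≤ b)
    (hf : LipschitzOnWith C f (Set.Icc a b)) :
    ENNReal.ofReal ‖f b - f a‖ ≤ ∫⁻ t in Set.Icc a b, ENNReal.ofReal ‖deriv f t‖ := by
  rcases eq_or_ne (f b) (f a) with h | h
  · simp [h]
  set v : E := ‖f b - f a‖⁻¹ • (f b - f a) with hv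
  have hfba : f b - f a ≠ 0 := sub_ne_zero.2 h
  have hnv : ‖v‖ = 1 := norm_smul_inv_norm hfba
  set φ : ℝ → ℝ := fun t => (innerSL ℝ v) (f t) with hφ
  have hφlip : LipschitzOnWith (‖innerSL ℝ v‖₊ * C) φ (Set.Icc a b) :=
    (innerSL ℝ v).lipschitz.comp_lipschitzOnWith hf
  obtain ⟨H, hHlip, hEq⟩ := hφlip.extend_real
  set c : ℝ := ((‖innerSL ℝ v‖₊ * C : NNReal) : ℝ) with hc
  have hc0 : 0 ≤ c := (‖innerSL ℝ v‖₊ * C).coe_nonneg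
  set u : ℝ → ℝ := fun t => c * t - H t with hu
  have humono : Monotone u := by
    intro s t hst
    have := hHlip.dist_le_mul t s
    rw [Real.dist_eq, Real.dist_eq] at this
    have h1 : H t - H s ≤ c * (t - s) := by
      have := (abs_le.1 this).2
      rw [abs_of_nonneg (sub_nonneg.2 hst)] at this
      linarith [le_abs_self (H t - H s), this]
    simp only [hu]
    nlinarith
  have hucont : Continuous u := (continuous_const.mul continuous_id).sub hHlip.continuous
  set S : StieltjesFunction ℝ := ⟨u, humono, fun x => hucont.continuousWithinAt⟩ with hS
  set μ : Measure ℝ := S.measure with hμ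
  have hrn : ∀ᵐ t, HasDerivAt u (μ.rnDeriv volume t).toReal t := S.ae_hasDerivAt
  have hdiff : ∀ᵐ t, t ∈ Set.Icc a b → DifferentiableWithinAt ℝ f (Set.Icc a b) t :=
    hf.ae_differentiableWithinAt_of_mem
  have hfin : ∀ᵐ t, μ.rnDeriv volume t < ⊤ := Measure.rnDeriv_lt_top μ volume
  have hkey : ∀ᵐ t, t ∈ Set.Ioo a b →
      ENNReal.ofReal c ≤ ENNReal.ofReal ‖deriv f t‖ + μ.rnDeriv volume t := by
    filter_upwards [hrn, hdiff, hfin] with t h1 h2 h3 ht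
    have hmem : Set.Icc a b ∈ nhds t := Icc_mem_nhds ht.1 ht.2
    have hdf : DifferentiableAt ℝ f t :=
      (h2 (Ioo_subset_Icc_self ht)).differentiableAt hmem
    have hdφ : HasDerivAt φ ((innerSL ℝ v) (deriv f t)) t :=
      (innerSL ℝ v).hasFDerivAt.comp_hasDerivAt t hdf.hasDerivAt
    have hdH : HasDerivAt H ((innerSL ℝ v) (deriv f t)) t :=
      hdφ.congr_of_eventuallyEq (hEq.eventuallyEq_of_mem hmem).symm
    have hid : HasDerivAt (fun s : ℝ => c * s) c t := by
      simpa using (hasDerivAt_id t).const_mul c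
    have hdu : HasDerivAt u (c - (innerSL ℝ v) (deriv f t)) t := hid.sub hdH
    have heq : (μ.rnDeriv volume t).toReal = c - (innerSL ℝ v) (deriv f t) := h1.unique hdu
    have hinner : (innerSL ℝ v) (deriv f t) ≤ ‖deriv f t‖ := by
      have := real_inner_le_norm v (deriv f t)
      simpa [hnv] using this
    have hcle : c ≤ ‖deriv f t‖ + (μ.rnDeriv volume t).toReal := by
      rw [heq]; linarith
    calc ENNReal.ofReal c ≤ ENNReal.ofReal (‖deriv f t‖ + (μ.rnDeriv volume t).toReal) :=
          ENNReal.ofReal_le_ofReal hcle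
      _ = ENNReal.ofReal ‖deriv f t‖ + ENNReal.ofReal (μ.rnDeriv volume t).toReal :=
          ENNReal.ofReal_add (norm_nonneg _) ENNReal.toReal_nonneg
      _ = ENNReal.ofReal ‖deriv f t‖ + μ.rnDeriv volume t := by
          rw [ENNReal.ofReal_toReal h3.ne]
  have I1 : ENNReal.ofReal c * ENNReal.ofReal (b - a) ≤
      (∫⁻ t in Set.Ioo a b, ENNReal.ofReal ‖deriv f t‖) +
        ∫⁻ t in Set.Ioo a b, μ.rnDeriv volume t := by
    calc ENNReal.ofReal c * ENNReal.ofReal (b - a)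
        = ∫⁻ _ in Set.Ioo a b, ENNReal.ofReal c := by
          rw [setLIntegral_const, Real.volume_Ioo]
      _ ≤ ∫⁻ t in Set.Ioo a b,
            (ENNReal.ofReal ‖deriv f t‖ + μ.rnDeriv volume t) :=
          lintegral_mono_ae ((ae_restrict_iff' measurableSet_Ioo).2 hkey)
      _ = _ := lintegral_add_right _ (Measure.measurable_rnDeriv μ volume)
  have I2 : ∫⁻ t in Set.Ioo a b, μ.rnDeriv volume t ≤ ENNReal.ofReal (u b - u a) :=
    (lintegral_mono_set Ioo_subset_Ioc_self).trans
      ((Measure.setLIntegral_rnDeriv_le _).trans_eq (S.measure_Ioc a b))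
  have hHba : H b - H a = ‖f b - f a‖ := by
    have hHa : H a = φ a := (hEq (Set.left_mem_Icc.2 hab)).symm
    have hHb : H b = φ b := (hEq (Set.right_mem_Icc.2 hab)).symm
    have : (innerSL ℝ v) (f b) - (innerSL ℝ v) (f a) = ‖f b - f a‖ := by
      rw [← map_sub, hv]
      simp only [innerSL_apply_apply]
      rw [real_inner_smul_left, real_inner_self_eq_norm_mul_norm]
      field_simp
    rw [hHa, hHb, hφ]
    exact this
  have hub : 0 ≤ u b - u a := sub_nonneg.2 (humono hab)
  have hfinal : ENNReal.ofReal ‖f b - f a‖ ≤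
      ∫⁻ t in Set.Ioo a b, ENNReal.ofReal ‖deriv f t‖ := by
    have h1 : ‖f b - f a‖ = c * (b - a) - (u b - u a) := by
      simp only [hu]; linarith [hHba]
    rw [h1, ENNReal.ofReal_sub _ hub]
    rw [tsub_le_iff_right]
    calc ENNReal.ofReal (c * (b - a)) = ENNReal.ofReal c * ENNReal.ofReal (b - a) :=
          ENNReal.ofReal_mul hc0
      _ ≤ _ := I1.trans (add_le_add_right I2 _)
  exact hfinal.trans (lintegral_mono_set Ioo_subset_Icc_self)

/-- Lower bound for the Agmon distance via a separating annulus: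
if `W ⊆ W'` are closed neighborhoods of `z`, `α := inf{|x−y| : x ∈ Ω \ W', y ∈ W} > 0`,
and `inf_{cl(W' \ W)} g > K/α` for some `K > 0`, then for every `B ⊆ Ω` with
`B ∩ W' = ∅` one has `inf_{y ∈ B} d_a(z,y) > K`. -/
theorem agmonDist_lower_bound_annulus {d : ℕ}
    (Ω : Set (EuclideanSpace ℝ (Fin d)))
    (g : EuclideanSpace ℝ (Fin d) → ℝ) (hg : ContinuousOn g Ω) (hg0 : ∀ x ∈ Ω, 0 ≤ g x)
    (z : EuclideanSpace ℝ (Fin d)) (hz : z ∈ Ω)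
    (W W' : Set (EuclideanSpace ℝ (Fin d)))
    (hWc : IsClosed W) (hW'c : IsClosed W') (hWW' : W ⊆ W') (hW'Ω : W' ⊆ Ω)
    (hWnhd : W ∈ 𝓝 z)
    (α : ℝ) (hαdef : α = sInf {r : ℝ | ∃ x ∈ Ω \ W', ∃ y ∈ W, r = dist x y})
    (hα : 0 < α)
    (K : ℝ) (hK : 0 < K)
    (hgK : K / α < sInf (g '' closure (W' \ W))) :
    ∀ B : Set (EuclideanSpace ℝ (Fin d)), B ⊆ Ω → B ∩ W' = ∅ →
      ENNReal.ofReal K < ⨅ y ∈ B, agmonDistE Ω g z y := by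
  intro B hBΩ hBW'
  set m : ℝ := sInf (g '' closure (W' \ W)) with hm
  have hclW' : closure (W' \ W) ⊆ W' := closure_minimal Set.diff_subset hW'c
  have hbdd : BddBelow (g '' closure (W' \ W)) := by
    refine ⟨0, ?_⟩
    rintro r ⟨x, hx, rfl⟩
    exact hg0 x (hW'Ω (hclW' hx))
  have hmle : ∀ x ∈ closure (W' \ W), m ≤ g x := fun x hx => csInf_le hbdd ⟨x, hx, rfl⟩
  have hKm : K < m * α := (div_lt_iff₀ hα).1 hgK
  have hm0 : 0 < m := lt_trans (div_pos hK hα) hgK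
  have hmα0 : 0 < m * α := mul_pos hm0 hα
  have hzW : z ∈ W := mem_of_mem_nhds hWnhd
  have main : ∀ y ∈ B, ENNReal.ofReal (m * α) ≤ agmonDistE Ω g z y := by
    intro y hy
    have hyW' : y ∉ W' := fun h =>
      (Set.eq_empty_iff_forall_notMem.1 hBW' y) ⟨hy, h⟩
    apply le_sInf
    rintro L ⟨γ, ⟨C, hlip⟩, hmemΩ, h0, h1, rfl⟩
    -- first exit time from W'
    set S2 : Set ℝ := {t | t ∈ Set.Icc (0:ℝ) 1 ∧ γ t ∉ W'} with hS2
    have hS2mem : (1:ℝ) ∈ S2 := ⟨⟨zero_le_one, le_refl 1⟩, h1 ▸ hyW'⟩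
    have hS2ne : S2.Nonempty := ⟨1, hS2mem⟩
    have hS2bdd : BddBelow S2 := ⟨0, fun t ht => ht.1.1⟩
    set t2 : ℝ := sInf S2 with ht2
    have h0t2 : 0 ≤ t2 := le_csInf hS2ne fun t ht => ht.1.1
    have ht21 : t2 ≤ 1 := csInf_le hS2bdd hS2mem
    have hbefore : ∀ t, 0 ≤ t → t < t2 → γ t ∈ W' := by
      intro t ht0 htlt
      by_contra hne
      exact absurd (csInf_le hS2bdd ⟨⟨ht0, htlt.le.trans ht21⟩, hne⟩) (not_le.2 htlt)
    have ht2cl : γ t2 ∈ closure (Ω \ W') := by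
      have hsub : S2 ⊆ Set.Icc (0:ℝ) 1 := fun t ht => ht.1
      have hcont : ContinuousWithinAt γ S2 t2 :=
        ((hlip.continuousOn) t2 ⟨h0t2, ht21⟩).mono hsub
      have h1' : γ t2 ∈ closure (γ '' S2) :=
        hcont.mem_closure_image (csInf_mem_closure hS2ne hS2bdd)
      refine closure_mono ?_ h1'
      rintro x ⟨t, ht, rfl⟩
      exact ⟨hmemΩ t ht.1, ht.2⟩
    -- last exit time from W before t2
    set S1 : Set ℝ := {t | t ∈ Set.Icc (0:ℝ) t2 ∧ γ t ∈ W} with hS1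
    have hS1mem : (0:ℝ) ∈ S1 := ⟨⟨le_refl 0, h0t2⟩, h0 ▸ hzW⟩
    have hS1ne : S1.Nonempty := ⟨0, hS1mem⟩
    have hS1bdd : BddAbove S1 := ⟨t2, fun t ht => ht.1.2⟩
    set t1 : ℝ := sSup S1 with ht1
    have h0t1 : 0 ≤ t1 := le_csSup hS1bdd hS1mem
    have ht1t2 : t1 ≤ t2 := csSup_le hS1ne fun t ht => ht.1.2
    have hγt1W : γ t1 ∈ W := by
      have hsub : S1 ⊆ Set.Icc (0:ℝ) 1 := fun t ht => ⟨ht.1.1, ht.1.2.trans ht21⟩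
      have hcont : ContinuousWithinAt γ S1 t1 :=
        ((hlip.continuousOn) t1 ⟨h0t1, ht1t2.trans ht21⟩).mono hsub
      have h1' : γ t1 ∈ closure (γ '' S1) :=
        hcont.mem_closure_image (csSup_mem_closure hS1ne hS1bdd)
      have : closure (γ '' S1) ⊆ W := by
        rw [← hWc.closure_eq]
        exact closure_mono (by rintro x ⟨t, ht, rfl⟩; exact ht.2)
      exact this h1'
    have hmid : ∀ t ∈ Set.Ioo t1 t2, γ t ∈ W' \ W := by
      intro t ht
      refine ⟨hbefore t (h0t1.trans ht.1.le) ht.2, fun hW => ?_⟩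
      exact absurd (le_csSup hS1bdd ⟨⟨h0t1.trans ht.1.le, ht.2.le⟩, hW⟩) (not_le.2 ht.1)
    -- distance bound
    have hdist : α ≤ dist (γ t2) (γ t1) := by
      have hset : Ω \ W' ⊆ {x | α ≤ dist x (γ t1)} := by
        intro x hx
        rw [hαdef]
        have hmemr : dist x (γ t1) ∈ {r : ℝ | ∃ x ∈ Ω \ W', ∃ y ∈ W, r = dist x y} :=
          ⟨x, hx, γ t1, hγt1W, rfl⟩
        have hbddr : BddBelow {r : ℝ | ∃ x ∈ Ω \ W', ∃ y ∈ W, r = dist x y} := by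
          refine ⟨0, ?_⟩
          rintro r ⟨x', _, y', _, rfl⟩
          exact dist_nonneg
        exact csInf_le hbddr hmemr
      have hclosed : IsClosed {x : EuclideanSpace ℝ (Fin d) | α ≤ dist x (γ t1)} :=
        isClosed_le continuous_const (continuous_id.dist continuous_const)
      exact (closure_minimal hset hclosed) ht2cl
    -- integral chain
    have hlip' : LipschitzOnWith C γ (Set.Icc t1 t2) :=
      hlip.mono (Set.Icc_subset_Icc h0t1 ht21)
    have hkey := lipschitz_norm_sub_le_lintegral_deriv ht1t2 hlip'
    have hnorm : α ≤ ‖γ t2 - γ t1‖ := by rwa [← dist_eq_norm]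
    calc ENNReal.ofReal (m * α) = ENNReal.ofReal m * ENNReal.ofReal α :=
          ENNReal.ofReal_mul hm0.le
      _ ≤ ENNReal.ofReal m * ENNReal.ofReal ‖γ t2 - γ t1‖ :=
          mul_le_mul_right (ENNReal.ofReal_le_ofReal hnorm) _
      _ ≤ ENNReal.ofReal m * ∫⁻ t in Set.Icc t1 t2, ENNReal.ofReal ‖deriv γ t‖ :=
          mul_le_mul_right hkey _
      _ = ENNReal.ofReal m * ∫⁻ t in Set.Ioo t1 t2, ENNReal.ofReal ‖deriv γ t‖ := by
          rw [setLIntegral_congr (Ioo_ae_eq_Icc (μ := volume) (a := t1) (b := t2)).symm]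
      _ = ∫⁻ t in Set.Ioo t1 t2, ENNReal.ofReal m * ENNReal.ofReal ‖deriv γ t‖ :=
          (lintegral_const_mul' _ _ ENNReal.ofReal_ne_top).symm
      _ ≤ ∫⁻ t in Set.Ioo t1 t2, ENNReal.ofReal (g (γ t) * ‖deriv γ t‖) := by
          refine lintegral_mono_ae ((ae_restrict_iff' measurableSet_Ioo).2 (ae_of_all _ ?_))
          intro t ht
          rw [← ENNReal.ofReal_mul hm0.le]
          exact ENNReal.ofReal_le_ofReal
            (mul_le_mul_of_nonneg_right (hmle _ (subset_closure (hmid t ht))) (norm_nonneg _))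
      _ ≤ ∫⁻ t in Set.Icc 0 1, ENNReal.ofReal (g (γ t) * ‖deriv γ t‖) :=
          lintegral_mono_set fun t ht => ⟨h0t1.trans ht.1.le, ht.2.le.trans ht21⟩
  calc ENNReal.ofReal K < ENNReal.ofReal (m * α) :=
        (ENNReal.ofReal_lt_ofReal_iff hmα0).2 hKm
    _ ≤ ⨅ y ∈ B, agmonDistE Ω g z y := le_iInf₂ main
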